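/- Let d ≥ 1 and k ≥ 1, and let G = (V,D) be a graph with no isolated vertices whose edge set D is a k-fold R_d-circuit having at most one technicolour vertex. Then D is a trivial k-fold R_d-circuit, i.e., its principal partition has exactly k parts. -/

import Mathlib

open scoped BigOperators

/-- The row of the `d`-dimensional rigidity matrix of a realisation `p : V → ℝ^d`
indexed by the (unordered) edge `e`. -/
noncomputable def rigRow (d : ℕ) {V : Type*} [DecidableEq V]
    (p : V → Fin d → ℝ) (e : Sym2 V) : V × Fin d → ℝ :=
  Sym2.lift
    ⟨fun u v wi =>
        (((if wi.1 = u then (1 : ℝ) else 0) - (if wi.1 = v then (1 : ℝ) else 0)) *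
          (p u wi.2 - p v wi.2)),
      fun u v => by funext wi; ring⟩ e

/-- A realisation is generic if the coordinates of the points form an algebraically
independent set over `ℚ`. -/
def Generic (d : ℕ) {V : Type*} (p : V → Fin d → ℝ) : Prop :=
  AlgebraicIndependent ℚ fun vi : V × Fin d => p vi.1 vi.2

/-- `rrk d p F` : the rank of the set of rows of the rigidity matrix of `(K_V, p)`
indexed by the edges in `F`.  For generic `p` this is the rank function `r_d` of
the generic `d`-dimensional rigidity matroid. -/
noncomputable def rrk (d : ℕ) {V : Type*} [Fintype V] [DecidableEq V]
    (p : V → Fin d → ℝ) (F : Set (Sym2 V)) : ℕ :=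
  Module.finrank ℝ (Submodule.span ℝ (rigRow d p '' F))

/-- `D` is a `k`-fold circuit (with respect to the realisation `p`) :
`r (D \ {f}) = r D` for every `f ∈ D`, and `r D = |D| - k`. -/
def IsKFoldCircuit (d : ℕ) {V : Type*} [Fintype V] [DecidableEq V]
    (p : V → Fin d → ℝ) (D : Finset (Sym2 V)) (k : ℕ) : Prop :=
  (∀ f ∈ D, rrk d p (↑D \ {f}) = rrk d p ↑D) ∧ rrk d p ↑D + k = D.card

/-- An `R_d`-circuit: `r C = |C| - 1` and `r (C \ {f}) = r C` for all `f ∈ C`. -/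
def IsCircuit (d : ℕ) {V : Type*} [Fintype V] [DecidableEq V]
    (p : V → Fin d → ℝ) (C : Finset (Sym2 V)) : Prop :=
  IsKFoldCircuit d p C 1

/-- `A` is a part of the principal partition of the `k`-fold circuit `D`:
the parts are the sets `D \ B` where `B` runs over the `(k-1)`-fold circuits
contained in `D`. -/
def IsPrincipalPart (d : ℕ) {V : Type*} [Fintype V] [DecidableEq V]
    (p : V → Fin d → ℝ) (D : Finset (Sym2 V)) (k : ℕ) (A : Finset (Sym2 V)) : Prop :=
  ∃ B ⊆ D, IsKFoldCircuit d p B (k - 1) ∧ A = D \ B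

/-- Closure in the rigidity matroid: all edges of `K_V` whose addition to `F`
does not increase the rank. -/
def rcl (d : ℕ) {V : Type*} [Fintype V] [DecidableEq V]
    (p : V → Fin d → ℝ) (F : Set (Sym2 V)) : Set (Sym2 V) :=
  {e | ¬ e.IsDiag ∧ rrk d p (insert e F) = rrk d p F}

/-- A `k`-fold circuit `D` with principal partition `A_1, …, A_ℓ` is balanced if
`r_d (⋂ i, cl_d (D \ A_i)) = ℓ - k`. -/
def IsBalanced (d : ℕ) {V : Type*} [Fintype V] [DecidableEq V]
    (p : V → Fin d → ℝ) (D : Finset (Sym2 V)) (k : ℕ) : Prop :=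
  rrk d p (⋂ A ∈ {A | IsPrincipalPart d p D k A}, rcl d p ↑(D \ A)) + k =
    Set.ncard {A | IsPrincipalPart d p D k A}

/-- A vertex is monochromatic if all edges of `D` incident with it lie in a single
part of the principal partition (and technicolour otherwise). -/
def Monochromatic (d : ℕ) {V : Type*} [Fintype V] [DecidableEq V]
    (p : V → Fin d → ℝ) (D : Finset (Sym2 V)) (k : ℕ) (w : V) : Prop :=
  ∃ A, IsPrincipalPart d p D k A ∧ ∀ e ∈ D, w ∈ e → e ∈ A

/-- The graph `(W, E)` is `R_d`-rigid: it is a complete graph on at most `d+1`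
vertices, or `r_d(E) = d|W| - (d+1 choose 2)`. -/
def IsRigidOn (d : ℕ) {V : Type*} [Fintype V] [DecidableEq V]
    (p : V → Fin d → ℝ) (W : Finset V) (E : Finset (Sym2 V)) : Prop :=
  (W.card ≤ d + 1 ∧ ∀ u ∈ W, ∀ w ∈ W, u ≠ w → s(u, w) ∈ E) ∨
    (rrk d p ↑E : ℤ) + ((d + 1).choose 2 : ℤ) = (d : ℤ) * (W.card : ℤ)

/-- The edge set of the cone of (the graph with edge set) `D` over a new vertex,
realised as `none : Option V`. -/
def coneEdges {V : Type*} [Fintype V] [DecidableEq V] (D : Finset (Sym2 V)) :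
    Finset (Sym2 (Option V)) :=
  D.image (Sym2.map Option.some) ∪
    Finset.univ.image fun u : V => s((Option.some u : Option V), (none : Option V))

/-- The degree of the vertex `w` in the edge set `D`. -/
def degIn {V : Type*} [Fintype V] [DecidableEq V] (D : Finset (Sym2 V)) (w : V) : ℕ :=
  (D.filter fun e => w ∈ e).card

/-- The set of vertices incident with an edge of `F`. -/
def esupp {V : Type*} [Fintype V] [DecidableEq V] (F : Finset (Sym2 V)) : Finset V :=
  Finset.univ.filter fun w => ∃ e ∈ F, w ∈ e

section Aux

variable {V : Type*} [Fintype V] [DecidableEq V]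

/-- The space of self-stresses supported in `F`. -/
noncomputable def Zsp (d : ℕ) (p : V → Fin d → ℝ) (F : Finset (Sym2 V)) :
    Submodule ℝ (Sym2 V → ℝ) where
  carrier := {ω | (∀ e ∉ F, ω e = 0) ∧ ∑ e : Sym2 V, ω e • rigRow d p e = 0}
  zero_mem' := ⟨fun _ _ => rfl, by simp⟩
  add_mem' := fun {a b} ha hb =>
    ⟨fun e he => by simp [Pi.add_apply, ha.1 e he, hb.1 e he],
     by simp_rw [Pi.add_apply, add_smul, Finset.sum_add_distrib, ha.2, hb.2, add_zero]⟩
  smul_mem' := fun c a ha =>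
    ⟨fun e he => by simp [Pi.smul_apply, ha.1 e he],
     by simp_rw [Pi.smul_apply, smul_assoc, ← Finset.smul_sum, ha.2, smul_zero]⟩

lemma mem_Zsp {d : ℕ} {p : V → Fin d → ℝ} {F : Finset (Sym2 V)} {ω : Sym2 V → ℝ} :
    ω ∈ Zsp d p F ↔ (∀ e ∉ F, ω e = 0) ∧ ∑ e : Sym2 V, ω e • rigRow d p e = 0 :=
  Iff.rfl

lemma Zsp_mono {d : ℕ} {p : V → Fin d → ℝ} {F G : Finset (Sym2 V)} (h : F ⊆ G) :
    Zsp d p F ≤ Zsp d p G := by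
  intro ω hω
  exact ⟨fun e he => hω.1 e (fun hc => he (h hc)), hω.2⟩

lemma Zsp_finrank_add_rrk (d : ℕ) (p : V → Fin d → ℝ) (F : Finset (Sym2 V)) :
    Module.finrank ℝ (Zsp d p F) + rrk d p ↑F = F.card := by
  classical
  set t := Fintype.linearCombination ℝ (fun e : ↥F => rigRow d p ↑e) with ht
  have key : ∀ ω : Sym2 V → ℝ, (∀ e ∉ F, ω e = 0) →
      t (fun e : ↥F => ω ↑e) = ∑ e : Sym2 V, ω e • rigRow d p e := by
    intro ω hω
    rw [ht, Fintype.linearCombination_apply]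
    rw [Finset.sum_coe_sort F (fun e => ω e • rigRow d p e)]
    refine Finset.sum_subset (Finset.subset_univ F) ?_
    intro e _ he
    rw [hω e he, zero_smul]
  have equiv : (Zsp d p F) ≃ₗ[ℝ] LinearMap.ker t := by
    refine
      { toFun := fun ω => ⟨fun e => ω.1 ↑e, ?_⟩
        map_add' := fun a b => rfl
        map_smul' := fun c a => rfl
        invFun := fun ν => ⟨fun e => if h : e ∈ F then ν.1 ⟨e, h⟩ else 0, ?_, ?_⟩
        left_inv := ?_
        right_inv := ?_ }
    · rw [LinearMap.mem_ker, key ω.1 ω.2.1]; exact ω.2.2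
    · intro e he; simp [he]
    · have h0 : (∀ e ∉ F, (fun e => if h : e ∈ F then ν.1 ⟨e, h⟩ else 0) e = 0) := by
        intro e he; simp [he]
      rw [← key _ h0]
      have hfun : (fun e : ↥F => if h : (e : Sym2 V) ∈ F then ν.1 ⟨e, h⟩ else 0) = ν.1 := by
        funext e; simp [e.2]
      rw [hfun]
      exact ν.2
    · intro ω
      apply Subtype.ext
      funext e
      by_cases he : e ∈ F
      · simp [he]
      · simp [he, ω.2.1 e he]
    · intro ν
      apply Subtype.ext
      funext e
      simp [e.2]
  have h1 := LinearMap.finrank_range_add_finrank_ker t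
  have h2 : Module.finrank ℝ (Zsp d p F) = Module.finrank ℝ (LinearMap.ker t) :=
    equiv.finrank_eq
  have h3 : LinearMap.range t = Submodule.span ℝ (rigRow d p '' ↑F) := by
    rw [ht, Fintype.range_linearCombination]
    congr 1
    rw [show (fun e : ↥F => rigRow d p ↑e) = rigRow d p ∘ (Subtype.val : ↥F → Sym2 V) from rfl,
      Set.range_comp, Subtype.range_val]
  have h4 : Module.finrank ℝ (↥F → ℝ) = F.card := by
    simp [Module.finrank_pi]
  rw [h2, rrk, ← h3, ← h4, Nat.add_comm]
  exact h1


lemma rrk_mono {d : ℕ} {p : V → Fin d → ℝ} {F G : Set (Sym2 V)} (h : F ⊆ G) :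
    rrk d p F ≤ rrk d p G :=
  Submodule.finrank_mono (Submodule.span_mono (Set.image_mono h))

lemma mem_Zsp_erase {d : ℕ} {p : V → Fin d → ℝ} {F : Finset (Sym2 V)} {f : Sym2 V}
    {ω : Sym2 V → ℝ} (hω : ω ∈ Zsp d p F) (h0 : ω f = 0) : ω ∈ Zsp d p (F.erase f) := by
  refine ⟨fun e he => ?_, hω.2⟩
  by_cases hef : e = f
  · rw [hef]; exact h0
  · exact hω.1 e (fun hc => he (Finset.mem_erase.2 ⟨hef, hc⟩))

lemma coloop_iff (d : ℕ) (p : V → Fin d → ℝ) {F : Finset (Sym2 V)} {f : Sym2 V}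
    (hf : f ∈ F) :
    rrk d p (↑F \ {f}) = rrk d p ↑F ↔ ∃ ω ∈ Zsp d p F, ω f ≠ 0 := by
  have hcoe : (↑F \ {f} : Set (Sym2 V)) = ↑(F.erase f) := (Finset.coe_erase f F).symm
  rw [hcoe]
  have hZle : Zsp d p (F.erase f) ≤ Zsp d p F := Zsp_mono (Finset.erase_subset f F)
  have h1 := Zsp_finrank_add_rrk d p (F.erase f)
  have h2 := Zsp_finrank_add_rrk d p F
  rw [Finset.card_erase_of_mem hf] at h1
  have hcard : 1 ≤ F.card := Finset.card_pos.2 ⟨f, hf⟩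
  have hr : rrk d p ↑(F.erase f) ≤ rrk d p ↑F := by
    refine rrk_mono ?_
    rw [Finset.coe_erase]
    exact Set.diff_subset
  constructor
  · intro h
    rw [h] at h1
    by_contra hno
    push_neg at hno
    have hle2 : Zsp d p F ≤ Zsp d p (F.erase f) := fun ω hω => mem_Zsp_erase hω (hno ω hω)
    have heq : Zsp d p (F.erase f) = Zsp d p F := le_antisymm hZle hle2
    rw [heq] at h1
    omega
  · rintro ⟨ω, hω, hωf⟩
    have hlt : Zsp d p (F.erase f) < Zsp d p F := by
      refine lt_of_le_of_ne hZle (fun heq => ?_)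
      rw [← heq] at hω
      exact hωf (hω.1 f (Finset.notMem_erase f F))
    have := Submodule.finrank_lt_finrank_of_lt hlt
    omega

end Aux


section Aux2

variable {V : Type*} [Fintype V] [DecidableEq V]

open Classical in
/-- The set of edges of `D` on which every stress in `H` vanishes. -/
noncomputable def partAux (D : Finset (Sym2 V)) (H : Submodule ℝ (Sym2 V → ℝ)) :
    Finset (Sym2 V) :=
  D.filter fun g => ∀ ω ∈ H, ω g = 0

lemma mem_partAux {D : Finset (Sym2 V)} {H : Submodule ℝ (Sym2 V → ℝ)} {g : Sym2 V} :
    g ∈ partAux D H ↔ g ∈ D ∧ ∀ ω ∈ H, ω g = 0 := by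
  classical
  simp [partAux]

/-- The principal part of the edge `f`. -/
noncomputable def prt (d : ℕ) (p : V → Fin d → ℝ) (D : Finset (Sym2 V)) (f : Sym2 V) :
    Finset (Sym2 V) :=
  partAux D (Zsp d p (D.erase f))

lemma mem_Zsp_erase_iff {d : ℕ} {p : V → Fin d → ℝ} {D : Finset (Sym2 V)} {f : Sym2 V}
    (hf : f ∈ D) {ω : Sym2 V → ℝ} :
    ω ∈ Zsp d p (D.erase f) ↔ ω ∈ Zsp d p D ∧ ω f = 0 := by
  constructor
  · intro hω
    exact ⟨Zsp_mono (Finset.erase_subset f D) hω, hω.1 f (Finset.notMem_erase f D)⟩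
  · rintro ⟨hω, h0⟩
    exact mem_Zsp_erase hω h0

lemma hyp_finrank {d k : ℕ} {p : V → Fin d → ℝ} {D : Finset (Sym2 V)}
    (hD : IsKFoldCircuit d p D k) {f : Sym2 V} (hf : f ∈ D) :
    Module.finrank ℝ (Zsp d p (D.erase f)) + 1 = k := by
  have h1 := Zsp_finrank_add_rrk d p (D.erase f)
  have h2 := Zsp_finrank_add_rrk d p D
  have h3 := hD.1 f hf
  have h4 := hD.2
  rw [Finset.card_erase_of_mem hf] at h1
  rw [← Finset.coe_erase] at h3
  have hcard : 1 ≤ D.card := Finset.card_pos.2 ⟨f, hf⟩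
  omega

lemma N_finrank {d k : ℕ} {p : V → Fin d → ℝ} {D : Finset (Sym2 V)}
    (hD : IsKFoldCircuit d p D k) :
    Module.finrank ℝ (Zsp d p D) = k := by
  have h2 := Zsp_finrank_add_rrk d p D
  have h4 := hD.2
  omega

lemma mem_prt {d : ℕ} {p : V → Fin d → ℝ} {D : Finset (Sym2 V)} {f g : Sym2 V} :
    g ∈ prt d p D f ↔ g ∈ D ∧ ∀ ω ∈ Zsp d p (D.erase f), ω g = 0 :=
  mem_partAux

lemma self_mem_prt {d : ℕ} {p : V → Fin d → ℝ} {D : Finset (Sym2 V)} {f : Sym2 V}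
    (hf : f ∈ D) : f ∈ prt d p D f :=
  mem_partAux.2 ⟨hf, fun ω hω => hω.1 f (Finset.notMem_erase f D)⟩

lemma hyp_eq_of_mem_prt {d k : ℕ} {p : V → Fin d → ℝ} {D : Finset (Sym2 V)}
    (hD : IsKFoldCircuit d p D k) {f g : Sym2 V} (hf : f ∈ D)
    (hgf : g ∈ prt d p D f) :
    Zsp d p (D.erase f) = Zsp d p (D.erase g) := by
  have hg : g ∈ D := (mem_partAux.1 hgf).1
  have hle : Zsp d p (D.erase f) ≤ Zsp d p (D.erase g) := by
    intro ω hω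
    exact (mem_Zsp_erase_iff hg).2 ⟨Zsp_mono (Finset.erase_subset f D) hω,
      (mem_partAux.1 hgf).2 ω hω⟩
  refine Submodule.eq_of_le_of_finrank_le hle ?_
  have h1 := hyp_finrank hD hf
  have h2 := hyp_finrank hD hg
  omega

lemma prt_eq_of_mem_prt {d k : ℕ} {p : V → Fin d → ℝ} {D : Finset (Sym2 V)}
    (hD : IsKFoldCircuit d p D k) {f g : Sym2 V} (hf : f ∈ D)
    (hgf : g ∈ prt d p D f) :
    prt d p D f = prt d p D g :=
  congrArg (partAux D) (hyp_eq_of_mem_prt hD hf hgf)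

lemma prt_eq_or_disjoint {d k : ℕ} {p : V → Fin d → ℝ} {D : Finset (Sym2 V)}
    (hD : IsKFoldCircuit d p D k) {f g : Sym2 V} (hf : f ∈ D) (hg : g ∈ D) :
    prt d p D f = prt d p D g ∨ Disjoint (prt d p D f) (prt d p D g) := by
  by_cases hdis : Disjoint (prt d p D f) (prt d p D g)
  · exact Or.inr hdis
  · left
    obtain ⟨h, hh⟩ := Finset.not_disjoint_iff.1 hdis
    rw [prt_eq_of_mem_prt hD hf hh.1, prt_eq_of_mem_prt hD hg hh.2]

end Aux2


section Aux3

variable {V : Type*} [Fintype V] [DecidableEq V]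

lemma principalPart_iff {d k : ℕ} (hk : 1 ≤ k) {p : V → Fin d → ℝ} {D : Finset (Sym2 V)}
    (hD : IsKFoldCircuit d p D k) {A : Finset (Sym2 V)} :
    IsPrincipalPart d p D k A ↔ ∃ f ∈ D, A = prt d p D f := by
  constructor
  · rintro ⟨B, hBD, hB, rfl⟩
    have hZBrank : Module.finrank ℝ (Zsp d p B) = k - 1 := by
      have h1 := Zsp_finrank_add_rrk d p B
      have h2 := hB.2
      omega
    have hBneD : B ≠ D := by
      intro h
      subst h
      have := N_finrank hD
      omega
    obtain ⟨f, hfD, hfB⟩ := Finset.exists_of_ssubset (lt_of_le_of_ne hBD hBneD)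
    have hle : Zsp d p B ≤ Zsp d p (D.erase f) := by
      intro ω hω
      exact (mem_Zsp_erase_iff hfD).2 ⟨Zsp_mono hBD hω, hω.1 f hfB⟩
    have hEq : Zsp d p B = Zsp d p (D.erase f) := by
      refine Submodule.eq_of_le_of_finrank_le hle ?_
      have := hyp_finrank hD hfD
      omega
    refine ⟨f, hfD, ?_⟩
    ext g
    rw [Finset.mem_sdiff, mem_prt, ← hEq]
    constructor
    · rintro ⟨hgD, hgB⟩
      exact ⟨hgD, fun ω hω => hω.1 g hgB⟩
    · rintro ⟨hgD, hall⟩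
      refine ⟨hgD, fun hgB => ?_⟩
      obtain ⟨ω, hω, hωg⟩ := (coloop_iff d p hgB).1 (hB.1 g hgB)
      exact hωg (hall ω hω)
  · rintro ⟨f, hf, rfl⟩
    have hprtD : prt d p D f ⊆ D := fun g hg => (mem_prt.1 hg).1
    have hfP : f ∈ prt d p D f := self_mem_prt hf
    have hZBeq : Zsp d p (D \ prt d p D f) = Zsp d p (D.erase f) := by
      apply le_antisymm
      · intro ω hω
        refine (mem_Zsp_erase_iff hf).2 ⟨Zsp_mono (Finset.sdiff_subset) hω, ?_⟩
        exact hω.1 f (by simp [Finset.mem_sdiff, hfP])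
      · intro ω hω
        refine ⟨fun e he => ?_, hω.2⟩
        by_cases heD : e ∈ D
        · have heP : e ∈ prt d p D f := by
            by_contra hc
            exact he (Finset.mem_sdiff.2 ⟨heD, hc⟩)
          exact (mem_partAux.1 heP).2 ω hω
        · exact (Zsp_mono (Finset.erase_subset f D) hω).1 e heD
    have hrk : Module.finrank ℝ (Zsp d p (D \ prt d p D f)) + 1 = k := by
      rw [hZBeq]; exact hyp_finrank hD hf
    have hcard := Zsp_finrank_add_rrk d p (D \ prt d p D f)
    refine ⟨D \ prt d p D f, Finset.sdiff_subset, ⟨?_, by omega⟩, ?_⟩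
    · intro g hg
      rw [coloop_iff d p hg]
      rw [Finset.mem_sdiff, mem_prt] at hg
      have : ¬ ∀ ω ∈ Zsp d p (D.erase f), ω g = 0 := fun h => hg.2 ⟨hg.1, h⟩
      push_neg at this
      obtain ⟨ω, hω, hωg⟩ := this
      exact ⟨ω, hZBeq ▸ hω, hωg⟩
    · rw [Finset.sdiff_sdiff_self_left, Finset.inter_eq_right.2 hprtD]

end Aux3


section Aux4

variable {V : Type*} [Fintype V] [DecidableEq V]

lemma rigRow_apply (d : ℕ) (p : V → Fin d → ℝ) (u v w : V) (i : Fin d) :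
    rigRow d p s(u, v) (w, i) =
      ((if w = u then (1 : ℝ) else 0) - (if w = v then (1 : ℝ) else 0)) * (p u i - p v i) :=
  rfl

lemma rigRow_eq_zero_of_not_mem {d : ℕ} {p : V → Fin d → ℝ} {e : Sym2 V} {w : V}
    (h : w ∉ e) (i : Fin d) : rigRow d p e (w, i) = 0 := by
  induction e using Sym2.ind with
  | _ u v =>
    rw [Sym2.mem_iff] at h
    push_neg at h
    rw [rigRow_apply, if_neg h.1, if_neg h.2]
    ring

lemma sum_rigRow (d : ℕ) (p : V → Fin d → ℝ) (e : Sym2 V) (i : Fin d) :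
    ∑ w : V, rigRow d p e (w, i) = 0 := by
  induction e using Sym2.ind with
  | _ u v =>
    simp only [rigRow_apply, sub_mul, Finset.sum_sub_distrib, ite_mul, one_mul, zero_mul,
      Finset.sum_ite_eq', Finset.mem_univ, if_true]
    ring

lemma trunc_mem_Zsp {d : ℕ} {p : V → Fin d → ℝ} {D A : Finset (Sym2 V)} (hAD : A ⊆ D)
    {ω : Sym2 V → ℝ} (hω : ω ∈ Zsp d p D) (v0 : V)
    (hsplit : ∀ w : V, w ≠ v0 → (∀ e ∈ D, w ∈ e → e ∈ A) ∨ (∀ e ∈ A, w ∉ e)) :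
    (fun g => if g ∈ A then ω g else 0) ∈ Zsp d p A := by
  refine ⟨fun e he => if_neg he, ?_⟩
  funext wi
  obtain ⟨w, i⟩ := wi
  rw [Finset.sum_apply, Pi.zero_apply]
  have hred : ∀ u : V, ∑ e : Sym2 V, ((if e ∈ A then ω e else 0) • rigRow d p e) (u, i)
      = ∑ e ∈ A, ω e * rigRow d p e (u, i) := by
    intro u
    calc ∑ e : Sym2 V, ((if e ∈ A then ω e else 0) • rigRow d p e) (u, i)
        = ∑ e : Sym2 V, (if e ∈ A then ω e * rigRow d p e (u, i) else 0) := by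
          refine Finset.sum_congr rfl fun e _ => ?_
          by_cases he : e ∈ A <;> simp [he]
      _ = ∑ e ∈ Finset.univ ∩ A, ω e * rigRow d p e (u, i) :=
          Finset.sum_ite_mem _ _ _
      _ = ∑ e ∈ A, ω e * rigRow d p e (u, i) := by rw [Finset.univ_inter]
  rw [hred]
  have hfull : ∀ u : V, ∑ e ∈ D, ω e * rigRow d p e (u, i) = 0 := by
    intro u
    have h2 := congrFun hω.2 (u, i)
    rw [Finset.sum_apply, Pi.zero_apply] at h2
    calc ∑ e ∈ D, ω e * rigRow d p e (u, i)
        = ∑ e : Sym2 V, ω e * rigRow d p e (u, i) :=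
          Finset.sum_subset (Finset.subset_univ D)
            (fun e _ he => by rw [hω.1 e he, zero_mul])
      _ = 0 := by rw [← h2]; exact Finset.sum_congr rfl fun e _ => rfl
  have hsum : ∑ u : V, ∑ e ∈ A, ω e * rigRow d p e (u, i) = 0 := by
    rw [Finset.sum_comm]
    refine Finset.sum_eq_zero fun e _ => ?_
    rw [← Finset.mul_sum, sum_rigRow, mul_zero]
  have hpure : ∀ u : V, u ≠ v0 → ∑ e ∈ A, ω e * rigRow d p e (u, i) = 0 := by
    intro u hu
    rcases hsplit u hu with hall | hnone
    · calc ∑ e ∈ A, ω e * rigRow d p e (u, i)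
          = ∑ e ∈ D, ω e * rigRow d p e (u, i) :=
            Finset.sum_subset hAD (fun e heD heA => by
              rw [rigRow_eq_zero_of_not_mem (fun hx => heA (hall e heD hx)) i, mul_zero])
        _ = 0 := hfull u
    · refine Finset.sum_eq_zero fun e he => ?_
      rw [rigRow_eq_zero_of_not_mem (hnone e he) i, mul_zero]
  by_cases hw : w = v0
  · subst hw
    have h4 : ∑ u : V, ∑ e ∈ A, ω e * rigRow d p e (u, i)
        = ∑ e ∈ A, ω e * rigRow d p e (w, i) :=
      Finset.sum_eq_single_of_mem w (Finset.mem_univ w) (fun u _ hu => hpure u hu)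
    rw [← h4]
    exact hsum
  · exact hpure w hw

end Aux4


section Aux5

variable {V : Type*} [Fintype V] [DecidableEq V]

lemma finrank_le_inf_ker_add_one (U : Submodule ℝ (Sym2 V → ℝ)) (g : Sym2 V) :
    Module.finrank ℝ U ≤
      Module.finrank ℝ ↥(U ⊓ LinearMap.ker (LinearMap.proj g : (Sym2 V → ℝ) →ₗ[ℝ] ℝ)) + 1 := by
  set φ := (LinearMap.proj g : (Sym2 V → ℝ) →ₗ[ℝ] ℝ).domRestrict U with hφ
  have h1 := LinearMap.finrank_range_add_finrank_ker φ
  have h2 : Module.finrank ℝ (LinearMap.ker φ) =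
      Module.finrank ℝ ↥(U ⊓ LinearMap.ker (LinearMap.proj g : (Sym2 V → ℝ) →ₗ[ℝ] ℝ)) := by
    rw [hφ, LinearMap.ker_domRestrict, ← Submodule.finrank_map_subtype_eq,
      Submodule.map_comap_subtype]
  have h3 : Module.finrank ℝ (LinearMap.range φ) ≤ 1 := by
    have := Submodule.finrank_le (LinearMap.range φ)
    simpa using this
  omega

lemma lower_bound {d k : ℕ} {p : V → Fin d → ℝ} {D : Finset (Sym2 V)}
    (hD : IsKFoldCircuit d p D k)
    (S : Finset (Finset (Sym2 V))) (hS : ∀ A ∈ S, ∃ f ∈ D, A = prt d p D f) :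
    Module.finrank ℝ (Zsp d p D) ≤
      Module.finrank ℝ ↥(Zsp d p D ⊓ ⨅ A ∈ S, ⨅ g ∈ A,
        LinearMap.ker (LinearMap.proj g : (Sym2 V → ℝ) →ₗ[ℝ] ℝ)) + S.card := by
  classical
  induction S using Finset.induction_on with
  | empty =>
    have : (⨅ A ∈ (∅ : Finset (Finset (Sym2 V))), ⨅ g ∈ A,
        LinearMap.ker (LinearMap.proj g : (Sym2 V → ℝ) →ₗ[ℝ] ℝ)) = ⊤ := by
      simp [iInf_emptyset]
    rw [this, inf_top_eq]
    simp
  | @insert A S hA ih =>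
    obtain ⟨f, hf, rfl⟩ := hS A (Finset.mem_insert_self A S)
    have ih' := ih (fun B hB => hS B (Finset.mem_insert_of_mem hB))
    set X := Zsp d p D ⊓ ⨅ B ∈ S, ⨅ g ∈ B,
        LinearMap.ker (LinearMap.proj g : (Sym2 V → ℝ) →ₗ[ℝ] ℝ) with hX
    have hkey : Zsp d p D ⊓ ⨅ B ∈ insert (prt d p D f) S, ⨅ g ∈ B,
        LinearMap.ker (LinearMap.proj g : (Sym2 V → ℝ) →ₗ[ℝ] ℝ)
        = X ⊓ LinearMap.ker (LinearMap.proj f : (Sym2 V → ℝ) →ₗ[ℝ] ℝ) := by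
      ext ω
      simp only [hX, Submodule.mem_inf, Submodule.mem_iInf, LinearMap.mem_ker,
        LinearMap.proj_apply, Finset.mem_insert]
      constructor
      · rintro ⟨hω, hall⟩
        refine ⟨⟨hω, fun B hB g hg => hall B (Or.inr hB) g hg⟩, ?_⟩
        exact hall (prt d p D f) (Or.inl rfl) f (self_mem_prt hf)
      · rintro ⟨⟨hω, hall⟩, hωf⟩
        refine ⟨hω, fun B hB g hg => ?_⟩
        rcases hB with rfl | hB
        · exact (mem_prt.1 hg).2 ω ((mem_Zsp_erase_iff hf).2 ⟨hω, hωf⟩)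
        · exact hall B hB g hg
    rw [hkey, Finset.card_insert_of_notMem hA]
    have hdrop := finrank_le_inf_ker_add_one X f
    omega

lemma upper_bound {d : ℕ} {p : V → Fin d → ℝ}
    (S : Finset (Finset (Sym2 V)))
    (hdisj : ∀ A ∈ S, ∀ B ∈ S, A ≠ B → Disjoint A B)
    (hnontriv : ∀ A ∈ S, ∃ ω ∈ Zsp d p A, ω ≠ 0) :
    S.card ≤ Module.finrank ℝ ↥(⨆ A ∈ S, Zsp d p A) := by
  classical
  induction S using Finset.induction_on with
  | empty => simp
  | @insert A S hA ih =>
    have ih' := ih (fun B hB C hC h => hdisj B (Finset.mem_insert_of_mem hB)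
      C (Finset.mem_insert_of_mem hC) h)
      (fun B hB => hnontriv B (Finset.mem_insert_of_mem hB))
    rw [Finset.iSup_insert, Finset.card_insert_of_notMem hA]
    have hbot : Zsp d p A ⊓ (⨆ B ∈ S, Zsp d p B) = ⊥ := by
      rw [Submodule.eq_bot_iff]
      intro ω hω
      have h1 : ω ∈ Zsp d p A := hω.1
      have h2 : ∀ g ∈ A, ω g = 0 := by
        intro g hg
        have hle : (⨆ B ∈ S, Zsp d p B) ≤
            LinearMap.ker (LinearMap.proj g : (Sym2 V → ℝ) →ₗ[ℝ] ℝ) := by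
          refine iSup_le fun B => iSup_le fun hB => ?_
          intro ν hν
          have hdAB : Disjoint A B := hdisj A (Finset.mem_insert_self A S) B
            (Finset.mem_insert_of_mem hB) (fun h => hA (h ▸ hB))
          exact hν.1 g (Finset.disjoint_left.1 hdAB hg)
        exact hle hω.2
      funext g
      by_cases hg : g ∈ A
      · exact h2 g hg
      · exact h1.1 g hg
    have hrank := Submodule.finrank_sup_add_finrank_inf_eq (Zsp d p A) (⨆ B ∈ S, Zsp d p B)
    rw [hbot] at hrank
    have hpos : 0 < Module.finrank ℝ (Zsp d p A) := by
      obtain ⟨ω, hω, hne⟩ := hnontriv A (Finset.mem_insert_self A S)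
      have : Nontrivial (Zsp d p A) :=
        ⟨⟨ω, hω⟩, 0, fun h => hne (by simpa [Subtype.ext_iff] using h)⟩
      exact Module.finrank_pos_iff.2 this
    have hb0 : Module.finrank ℝ (⊥ : Submodule ℝ (Sym2 V → ℝ)) = 0 := finrank_bot ℝ _
    omega

end Aux5

/-- Proposition 3.10: a `k`-fold `R_d`-circuit with at most one technicolour
vertex is trivial, i.e. its principal partition has exactly `k` parts. -/
theorem kfold_circuit_one_technicolour_trivial
    (d k : ℕ) (hd : 1 ≤ d) (hk : 1 ≤ k)
    {V : Type*} [Fintype V] [DecidableEq V]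
    (D : Finset (Sym2 V)) (hsimple : ∀ e ∈ D, ¬ e.IsDiag)
    (hcov : ∀ w : V, ∃ e ∈ D, w ∈ e)
    (p : V → Fin d → ℝ) (hp : Generic d p)
    (hD : IsKFoldCircuit d p D k)
    (htech : ({w : V | ¬ Monochromatic d p D k w}).Subsingleton) :
    Set.ncard {A : Finset (Sym2 V) | IsPrincipalPart d p D k A} = k := by
  classical
  have hDne : D.Nonempty := by
    rw [← Finset.card_pos]
    have := hD.2
    omega
  obtain ⟨e0, he0⟩ := hDne
  have hPset : {A : Finset (Sym2 V) | IsPrincipalPart d p D k A}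
      = ↑(D.image (prt d p D)) := by
    ext A
    simp only [Set.mem_setOf_eq, Finset.coe_image, Set.mem_image, Finset.mem_coe]
    rw [principalPart_iff hk hD]
    constructor
    · rintro ⟨f, hf, rfl⟩
      exact ⟨f, hf, rfl⟩
    · rintro ⟨f, hf, rfl⟩
      exact ⟨f, hf, rfl⟩
  rw [hPset, Set.ncard_coe_finset]
  set Im := D.image (prt d p D) with hIm
  have hmemIm : ∀ A ∈ Im, ∃ f ∈ D, A = prt d p D f := by
    intro A hA
    rw [hIm, Finset.mem_image] at hA
    obtain ⟨f, hf, h⟩ := hA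
    exact ⟨f, hf, h.symm⟩
  have hdisj : ∀ A ∈ Im, ∀ B ∈ Im, A ≠ B → Disjoint A B := by
    intro A hA B hB hne
    obtain ⟨f, hf, rfl⟩ := hmemIm A hA
    obtain ⟨g, hg, rfl⟩ := hmemIm B hB
    rcases prt_eq_or_disjoint hD hf hg with h | h
    · exact absurd h hne
    · exact h
  -- lower bound : k ≤ Im.card
  have hlow : k ≤ Im.card := by
    have h1 := lower_bound hD Im hmemIm
    have hbot : (Zsp d p D ⊓ ⨅ A ∈ Im, ⨅ g ∈ A,
        LinearMap.ker (LinearMap.proj g : (Sym2 V → ℝ) →ₗ[ℝ] ℝ)) = ⊥ := by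
      rw [Submodule.eq_bot_iff]
      intro ω hω
      have h2 : ∀ A ∈ Im, ∀ g ∈ A, ω g = 0 := by
        intro A hA g hg
        have h3 : ω ∈ (⨅ A ∈ Im, ⨅ g ∈ A,
            LinearMap.ker (LinearMap.proj g : (Sym2 V → ℝ) →ₗ[ℝ] ℝ)) := hω.2
        rw [Submodule.mem_iInf] at h3
        have h3' := h3 A
        rw [Submodule.mem_iInf] at h3'
        have h3'' := h3' hA
        rw [Submodule.mem_iInf] at h3''
        have h4 := h3'' g
        rw [Submodule.mem_iInf] at h4
        exact h4 hg
      funext g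
      by_cases hgD : g ∈ D
      · exact h2 _ (Finset.mem_image_of_mem _ hgD) g (self_mem_prt hgD)
      · exact hω.1.1 g hgD
    rw [hbot] at h1
    have h4 := N_finrank hD
    have h5 : Module.finrank ℝ (⊥ : Submodule ℝ (Sym2 V → ℝ)) = 0 := finrank_bot ℝ _
    omega
  -- the (at most one) technicolour vertex
  obtain ⟨v0, hv0⟩ : ∃ v0 : V, ∀ w : V, w ≠ v0 → Monochromatic d p D k w := by
    by_cases hall : ∀ w, Monochromatic d p D k w
    · exact ⟨e0.out.1, fun w _ => hall w⟩
    · push_neg at hall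
      obtain ⟨v1, hv1⟩ := hall
      refine ⟨v1, fun w hw => ?_⟩
      by_contra hc
      exact hw (htech hc hv1)
  -- each part supports a nonzero stress
  have hnontriv : ∀ A ∈ Im, ∃ ω ∈ Zsp d p A, ω ≠ 0 := by
    intro A hA
    obtain ⟨f, hf, rfl⟩ := hmemIm A hA
    obtain ⟨ω, hω, hωf⟩ := (coloop_iff d p hf).1 (hD.1 f hf)
    have hsub : prt d p D f ⊆ D := fun g hg => (mem_prt.1 hg).1
    have hsplit : ∀ w : V, w ≠ v0 →
        (∀ e ∈ D, w ∈ e → e ∈ prt d p D f) ∨ (∀ e ∈ prt d p D f, w ∉ e) := by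
      intro w hw
      obtain ⟨A0, hA0, hA0w⟩ := hv0 w hw
      have hA0Im : A0 ∈ Im := by
        obtain ⟨g, hg, rfl⟩ := (principalPart_iff hk hD).1 hA0
        exact Finset.mem_image_of_mem _ hg
      by_cases heq : A0 = prt d p D f
      · left
        intro e he hwe
        rw [← heq]
        exact hA0w e he hwe
      · right
        intro e he hwe
        have heA0 : e ∈ A0 := hA0w e (hsub he) hwe
        exact Finset.disjoint_left.1
          (hdisj A0 hA0Im (prt d p D f) hA (fun h => heq h)) heA0 he
    refine ⟨fun g => if g ∈ prt d p D f then ω g else 0,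
      trunc_mem_Zsp hsub hω v0 hsplit, ?_⟩
    intro h
    apply hωf
    have h5 := congrFun h f
    simpa [self_mem_prt hf] using h5
  -- upper bound : Im.card ≤ k
  have hup : Im.card ≤ k := by
    have h2 := upper_bound Im hdisj hnontriv
    have h3 : (⨆ A ∈ Im, Zsp d p A) ≤ Zsp d p D := by
      refine iSup_le fun A => iSup_le fun hA => ?_
      obtain ⟨f, hf, rfl⟩ := hmemIm A hA
      exact Zsp_mono (fun g hg => (mem_prt.1 hg).1)
    have h4 := Submodule.finrank_mono h3
    rw [N_finrank hD] at h4
    omega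
  omega
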